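/- Let α > 1, σ > 0, k > 0. Set c := σ/(αk), f(R) := √(1 + 4c/R + c²/R²) for R > 0, θ₊(R) := (2 + c/R + f(R))/(3α), and P_{k,R}(θ) := kR³θ(αθ − 1)² + σR²(1 − θ²). Then there exists R₀ > 0 such that for every R ≥ R₀: θ₊(R) ∈ [α⁻¹, 1] and θ₊(R) is the unique minimizer of P_{k,R} on the interval [α⁻¹, 1], i.e. P_{k,R}(θ₊(R)) < P_{k,R}(θ) for every θ ∈ [α⁻¹,1] with θ ≠ θ₊(R). Moreover θ₊(R) → α⁻¹ as R → +∞. -/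

import Mathlib

open Filter

noncomputable section

/-- The discriminant factor `f(R) = √(1 + 4c/R + c²/R²)`. -/
def fdisc (c R : ℝ) : ℝ := Real.sqrt (1 + 4*c/R + c^2/R^2)

/-- The critical point `θ₊(R) = (2 + c/R + f(R))/(3α)`. -/
def θplus (α c R : ℝ) : ℝ := (2 + c/R + fdisc c R) / (3*α)

/-- The critical point `θ₋(R) = (2 + c/R − f(R))/(3α)`. -/
def θminus (α c R : ℝ) : ℝ := (2 + c/R - fdisc c R) / (3*α)

/-- The total energy polynomial `P_{k,R}(θ) = kR³θ(αθ−1)² + σR²(1−θ²)`. -/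
def Ptot (α σ k R θ : ℝ) : ℝ := k*R^3*θ*(α*θ - 1)^2 + σ*R^2*(1 - θ^2)

lemma key_id (α k R u f θ : ℝ) (hf : f^2 = 1+4*u+u^2) (hα : α ≠ 0) :
    (k*R^3*θ*(α*θ-1)^2 + (α*k*u*R)*R^2*(1-θ^2))
    - (k*R^3*((2+u+f)/(3*α))*(α*((2+u+f)/(3*α))-1)^2
       + (α*k*u*R)*R^2*(1-((2+u+f)/(3*α))^2))
    = k*α^2*R^3*(θ - (2+u+f)/(3*α))^2*(θ - (2+u-2*f)/(3*α)) := by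
  field_simp
  linear_combination (3*k*R^3*(3*α*θ - (2+f+u))) * hf

set_option maxHeartbeats 1000000 in
/-- for large `R`, `θ₊(R)` lies in `[α⁻¹,1]` and is the unique minimizer of
`P_{k,R}` there; moreover `θ₊(R) → α⁻¹` as `R → +∞`. -/
theorem unique_minimizer_of_total_energy_polynomial (α σ k : ℝ)
    (hα : 1 < α) (hσ : 0 < σ) (hk : 0 < k) :
    (∃ R₀ : ℝ, 0 < R₀ ∧ ∀ R ≥ R₀,
      θplus α (σ/(α*k)) R ∈ Set.Icc α⁻¹ 1 ∧
      ∀ θ ∈ Set.Icc α⁻¹ (1:ℝ), θ ≠ θplus α (σ/(α*k)) R →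
        Ptot α σ k R (θplus α (σ/(α*k)) R) < Ptot α σ k R θ) ∧
    Tendsto (fun R => θplus α (σ/(α*k)) R) atTop (nhds α⁻¹) := by
  have hα0 : (0:ℝ) < α := by linarith
  set c : ℝ := σ/(α*k) with hcdef
  have hc0 : 0 < c := div_pos hσ (by positivity)
  have hε0 : (0:ℝ) < min 1 ((3*α-1)*(α-1)/(2*α)) := by
    apply lt_min one_pos
    apply div_pos (by nlinarith) (by linarith)
  set ε : ℝ := min 1 ((3*α-1)*(α-1)/(2*α)) with hεdef
  constructor
  · refine ⟨c/ε, div_pos hc0 hε0, ?_⟩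
    intro R hR
    have hR0 : 0 < R := lt_of_lt_of_le (div_pos hc0 hε0) hR
    set u : ℝ := c/R with hudef
    have hu0 : 0 < u := div_pos hc0 hR0
    have huε : u ≤ ε := by
      rw [hudef, div_le_iff₀ hR0]
      calc c = ε * (c/ε) := by field_simp
        _ ≤ ε * R := by
          apply mul_le_mul_of_nonneg_left hR (le_of_lt hε0)
    have hu1 : u ≤ 1 := le_trans huε (min_le_left _ _)
    have hu2 : u ≤ (3*α-1)*(α-1)/(2*α) := le_trans huε (min_le_right _ _)
    have hu2' : 2*α*u ≤ (3*α-1)*(α-1) := by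
      rw [le_div_iff₀ (by linarith : (0:ℝ) < 2*α)] at hu2
      linarith
    have hrad : 1 + 4*c/R + c^2/R^2 = 1+4*u+u^2 := by
      rw [hudef]; ring
    have hradpos : (1:ℝ) ≤ 1+4*u+u^2 := by nlinarith
    set f : ℝ := fdisc c R with hfdef
    have hf2 : f^2 = 1+4*u+u^2 := by
      rw [hfdef, fdisc, hrad, Real.sq_sqrt (by nlinarith)]
    have hf1 : 1 ≤ f := by
      rw [hfdef, fdisc, hrad]
      calc (1:ℝ) = Real.sqrt 1 := Real.sqrt_one.symm
        _ ≤ _ := Real.sqrt_le_sqrt hradpos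
    have htp : θplus α c R = (2+u+f)/(3*α) := by
      rw [θplus, hudef, hfdef]
    have hub : f ≤ 3*α-2-u := by
      have h1 : (0:ℝ) ≤ 3*α-2-u := by linarith
      have h2 : 1+4*u+u^2 ≤ (3*α-2-u)^2 := by nlinarith
      rw [hfdef, fdisc, hrad]
      calc Real.sqrt (1+4*u+u^2) ≤ Real.sqrt ((3*α-2-u)^2) := Real.sqrt_le_sqrt h2
        _ = 3*α-2-u := Real.sqrt_sq h1
    clear_value c ε u f
    have hmem : θplus α c R ∈ Set.Icc α⁻¹ 1 := by
      rw [htp, Set.mem_Icc]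
      constructor
      · rw [inv_eq_one_div, div_le_div_iff₀ hα0 (by linarith)]
        nlinarith
      · rw [div_le_one (by linarith)]
        linarith
    refine ⟨hmem, ?_⟩
    intro θ hθ hne
    have hσ' : σ = α*k*u*R := by
      rw [hudef, hcdef]
      field_simp
    have hPt : ∀ t:ℝ, Ptot α σ k R t = k*R^3*t*(α*t-1)^2 + (α*k*u*R)*R^2*(1-t^2) := by
      intro t; rw [Ptot, ← hσ']
    have hdiff : Ptot α σ k R θ - Ptot α σ k R (θplus α c R)
        = k*α^2*R^3*(θ - (2+u+f)/(3*α))^2*(θ - (2+u-2*f)/(3*α)) := by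
      rw [hPt, hPt, htp]
      exact key_id α k R u f θ hf2 (ne_of_gt hα0)
    rw [Set.mem_Icc] at hθ
    have hrlt : (2+u-2*f)/(3*α) < α⁻¹ := by
      rw [inv_eq_one_div, div_lt_div_iff₀ (by linarith : (0:ℝ) < 3*α) hα0]
      have hgt : (1:ℝ) < f^2 := by rw [hf2]; nlinarith
      have hne1 : f ≠ 1 := fun h => by rw [h] at hgt; norm_num at hgt
      have hf1' : 1 < f := lt_of_le_of_ne hf1 (Ne.symm hne1)
      have h1 : 2+u-2*f < 1 := by linarith
      have h2 := mul_lt_mul_of_pos_right h1 hα0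
      linarith
    have hne' : θ - (2+u+f)/(3*α) ≠ 0 := by
      rw [htp] at hne
      exact sub_ne_zero.mpr hne
    have hpos1 : 0 < (θ - (2+u+f)/(3*α))^2 := pow_two_pos_of_ne_zero hne'
    have hpos2 : 0 < θ - (2+u-2*f)/(3*α) := by linarith [hθ.1]
    have hposall : 0 < k*α^2*R^3*(θ - (2+u+f)/(3*α))^2*(θ - (2+u-2*f)/(3*α)) :=
      mul_pos (mul_pos (by positivity) hpos1) hpos2
    linarith [hdiff, hposall]
  · have h1 : Tendsto (fun R : ℝ => c/R) atTop (nhds 0) :=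
      Tendsto.div_atTop tendsto_const_nhds tendsto_id
    have h2 : Tendsto (fun R : ℝ => c^2/R^2) atTop (nhds 0) := by
      have : Tendsto (fun R : ℝ => (c/R)^2) atTop (nhds (0^2)) := h1.pow 2
      simpa [div_pow] using this
    have hrad : Tendsto (fun R : ℝ => 1 + 4*c/R + c^2/R^2) atTop (nhds 1) := by
      have h1' : Tendsto (fun R : ℝ => 4*c/R) atTop (nhds 0) :=
        Tendsto.div_atTop tendsto_const_nhds tendsto_id
      have := (tendsto_const_nhds (x := (1:ℝ)) (f := atTop)).add (h1'.add h2)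
      simpa using this.congr (by intro R; ring)
    have hfd : Tendsto (fun R : ℝ => fdisc c R) atTop (nhds 1) := by
      have := (Real.continuous_sqrt.tendsto 1).comp hrad
      simpa [fdisc, Real.sqrt_one, Function.comp_def] using this
    have hnum : Tendsto (fun R : ℝ => 2 + c/R + fdisc c R) atTop (nhds 3) := by
      have := ((tendsto_const_nhds (x := (2:ℝ)) (f := atTop)).add h1).add hfd
      norm_num at this
      exact this
    have := hnum.div_const (3*α)
    have heq : (3:ℝ)/(3*α) = α⁻¹ := by
      field_simp
    rw [heq] at this
    exact this.congr (fun R => rfl)
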